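/- Let p ≥ 5 be a prime. Then (1/(p+1))·∑_{k=0}^{p} (-1)^k·C(p+1,k+1)·C(2k,k) ≡ -1 + 2p + p·∑_{k=1}^{p-1} ((-1)^k/(k(k+1)))·C(p-1,k-1)·C(2k,k) (mod p²), as a congruence of rational numbers. -/

import Mathlib

/-- Congruence of rational numbers modulo `p^m`: `a ≡ b (mod p^m)` means
`a - b = p^m · (s/t)` with `p` not dividing `t`. -/
def ratCongr (p m : ℕ) (a b : ℚ) : Prop :=
  ∃ s t : ℤ, ¬ ((p : ℤ) ∣ t) ∧ (a - b) * (t : ℚ) = (p : ℚ) ^ m * (s : ℚ)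

open Finset in
lemma central_sq (p : ℕ) (hp : p.Prime) :
    (p : ℤ) ^ 2 ∣ ((2 * p).choose p : ℤ) - 2 := by
  have h2 : (2 * p).choose p = ∑ k ∈ range (p + 1), p.choose k ^ 2 := by
    rw [two_mul, Nat.add_choose_eq, Finset.Nat.sum_antidiagonal_eq_sum_range_succ_mk]
    refine Finset.sum_congr rfl fun k hk => ?_
    rw [Nat.choose_symm (by simpa using Nat.lt_succ_iff.mp (mem_range.mp hk))]; ring
  have h3 : (2 * p).choose p = 2 + ∑ i ∈ range (p - 1), p.choose (i + 1) ^ 2 := by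
    rw [h2]
    obtain ⟨q, rfl⟩ : ∃ q, p = q + 1 := ⟨p - 1, (Nat.succ_pred_eq_of_pos hp.pos).symm⟩
    simp only [Nat.add_sub_cancel]
    rw [Finset.sum_range_succ', Finset.sum_range_succ]
    simp [Nat.choose_self]
    omega
  rw [h3]
  push_cast
  have : (2 : ℤ) + ∑ i ∈ range (p - 1), (p.choose (i + 1) : ℤ) ^ 2 - 2
      = ∑ i ∈ range (p - 1), (p.choose (i + 1) : ℤ) ^ 2 := by ring
  rw [this]
  refine Finset.dvd_sum fun i hi => ?_
  have hd : (p : ℤ) ∣ (p.choose (i + 1) : ℤ) := by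
    exact_mod_cast Int.natCast_dvd_natCast.mpr
      (hp.dvd_choose_self (Nat.succ_ne_zero i) (by have := mem_range.mp hi; omega))
  exact pow_dvd_pow_of_dvd hd 2

lemma termwise (p j : ℕ) (hp5 : 5 ≤ p) (hj : j + 1 ≤ p - 1) :
    (1 / (p + 1 : ℚ)) * ((-1 : ℚ) ^ (j + 1) * ((p + 1).choose (j + 2) : ℚ) *
        ((2 * (j + 1)).choose (j + 1) : ℚ))
      = (p : ℚ) * (((-1 : ℚ) ^ (j + 1) / ((j + 1 : ℕ) * ((j + 1 : ℕ) + 1))) *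
        ((p - 1).choose (j + 1 - 1) : ℚ) * ((2 * (j + 1)).choose (j + 1) : ℚ)) := by
  have hnat : (p + 1).choose (j + 2) * ((j + 2) * (j + 1)) = (p + 1) * (p * (p - 1).choose j) := by
    have h1 : (p + 1) * p.choose (j + 1) = (p + 1).choose (j + 2) * (j + 2) :=
      Nat.add_one_mul_choose_eq p (j + 1)
    have h2 : p * (p - 1).choose j = p.choose (j + 1) * (j + 1) := by
      have h := Nat.add_one_mul_choose_eq (p - 1) j
      have hps : p - 1 + 1 = p := by omega
      rw [hps] at h
      exact h
    calc (p + 1).choose (j + 2) * ((j + 2) * (j + 1))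
        = ((p + 1).choose (j + 2) * (j + 2)) * (j + 1) := by ring
      _ = ((p + 1) * p.choose (j + 1)) * (j + 1) := by rw [h1]
      _ = (p + 1) * (p.choose (j + 1) * (j + 1)) := by ring
      _ = (p + 1) * (p * (p - 1).choose j) := by rw [h2]
  have hq : ((p + 1).choose (j + 2) : ℚ) * (((j : ℚ) + 2) * ((j : ℚ) + 1))
      = ((p : ℚ) + 1) * ((p : ℚ) * ((p - 1).choose j : ℚ)) := by exact_mod_cast hnat
  simp only [Nat.add_sub_cancel]
  have h1 : ((p : ℚ) + 1) ≠ 0 := by positivity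
  have h2 : ((j : ℚ) + 1) ≠ 0 := by positivity
  have h3 : ((j : ℚ) + 2) ≠ 0 := by positivity
  field_simp
  push_cast
  linear_combination (((2 * (j + 1)).choose (j + 1) : ℚ)) * hq

theorem alternating_sum_congruence (p : ℕ) (hp : p.Prime) (hp5 : 5 ≤ p) :
    ratCongr p 2
      ((1 / (p + 1 : ℚ)) * ∑ k ∈ Finset.range (p + 1),
        (-1 : ℚ) ^ k * ((p + 1).choose (k + 1) : ℚ) * ((2 * k).choose k : ℚ))
      (-1 + 2 * p + p * ∑ k ∈ Finset.Icc 1 (p - 1),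
        ((-1 : ℚ) ^ k / (k * (k + 1))) * ((p - 1).choose (k - 1) : ℚ) *
          ((2 * k).choose k : ℚ)) := by
  have hodd : Odd p := hp.odd_of_ne_two (by omega)
  set f : ℕ → ℚ := fun k =>
    (-1 : ℚ) ^ k * ((p + 1).choose (k + 1) : ℚ) * ((2 * k).choose k : ℚ) with hf
  set g : ℕ → ℚ := fun k =>
    ((-1 : ℚ) ^ k / (k * (k + 1))) * ((p - 1).choose (k - 1) : ℚ) * ((2 * k).choose k : ℚ) with hg
  have hsplit : ∑ k ∈ Finset.range (p + 1), f k
      = f 0 + f p + ∑ i ∈ Finset.range (p - 1), f (i + 1) := by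
    obtain ⟨q, rfl⟩ : ∃ q, p = q + 1 := ⟨p - 1, (Nat.succ_pred_eq_of_pos hp.pos).symm⟩
    rw [Finset.sum_range_succ', Finset.sum_range_succ]
    simp only [Nat.add_sub_cancel]
    ring
  have hIcc : ∑ k ∈ Finset.Icc 1 (p - 1), g k = ∑ i ∈ Finset.range (p - 1), g (i + 1) := by
    have hs : p - 1 + 1 = p := by omega
    rw [← Finset.Ico_add_one_right_eq_Icc, hs, Finset.sum_Ico_eq_sum_range]
    exact Finset.sum_congr rfl fun i _ => by rw [add_comm]
  have hterm : ∀ i ∈ Finset.range (p - 1), (1 / (p + 1 : ℚ)) * f (i + 1) = p * g (i + 1) := by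
    intro i hi
    have := termwise p i hp5 (by have := Finset.mem_range.mp hi; omega)
    simpa [hf, hg] using this
  have hf0 : f 0 = (p : ℚ) + 1 := by simp [hf]
  have hfp : f p = -(((2 * p).choose p : ℚ)) := by
    simp [hf, hodd.neg_one_pow, Nat.choose_self]
  obtain ⟨m, hm⟩ := central_sq p hp
  refine ⟨-m - 2, (p : ℤ) + 1, ?_, ?_⟩
  · intro h
    have h1 : (p : ℤ) ∣ 1 := (dvd_add_right dvd_rfl).mp h
    have := Int.le_of_dvd one_pos h1
    have := hp.two_le
    omega
  · have hmQ : ((2 * p).choose p : ℚ) - 2 = (p : ℚ) ^ 2 * (m : ℚ) := by exact_mod_cast hm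
    have hne : ((p : ℚ) + 1) ≠ 0 := by positivity
    rw [hsplit, hIcc, mul_add, mul_add, Finset.mul_sum, Finset.mul_sum,
      Finset.sum_congr rfl hterm, hf0, hfp]
    push_cast
    have hC : (((p * 2).choose p : ℕ) : ℚ) = (((2 * p).choose p : ℕ) : ℚ) := by rw [mul_comm]
    field_simp
    ring_nf
    linear_combination -hmQ - hC
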